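/- For every x ∈ ℝ^n and μ > 0: |ω_μ(x) − ω(x)| ≤ (μ²/2)·L·n. -/

import Mathlib

open MeasureTheory

/-- The standard Gaussian measure on ℝ^n, with density (2π)^{-n/2} e^{-‖v‖²/2}
with respect to Lebesgue measure. -/
noncomputable def stdGaussian (n : ℕ) : Measure (EuclideanSpace ℝ (Fin n)) :=
  volume.withDensity fun v =>
    ENNReal.ofReal ((2 * Real.pi) ^ (-(n : ℝ) / 2) * Real.exp (-‖v‖ ^ 2 / 2))

section Helpers

open Real RealInnerProductSpace
open scoped NNReal ENNReal

noncomputable def gφ (t : ℝ) : ℝ := (Real.sqrt (2*π))⁻¹ * Real.exp (-t^2/2)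

noncomputable def gρ (n : ℕ) (v : EuclideanSpace ℝ (Fin n)) : ℝ :=
  (2 * π) ^ (-(n : ℝ) / 2) * Real.exp (-‖v‖ ^ 2 / 2)

lemma gρ_nonneg (n : ℕ) (v : EuclideanSpace ℝ (Fin n)) : 0 ≤ gρ n v := by
  unfold gρ; positivity

lemma gρ_continuous (n : ℕ) : Continuous (gρ n) := by
  unfold gρ; fun_prop

lemma gφ_integrable : Integrable gφ := by
  unfold gφ
  apply Integrable.const_mul
  have := integrable_exp_neg_mul_sq (by norm_num : (0:ℝ) < 1/2)
  convert this using 2 with t; ring_nf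

lemma gφ_integral : ∫ t, gφ t = 1 := by
  unfold gφ
  rw [integral_const_mul]
  have := integral_gaussian (1/2)
  rw [show π / (1/2) = 2*π by ring] at this
  rw [show (fun t : ℝ => Real.exp (-t^2/2)) = fun t : ℝ => Real.exp (-(1/2) * t^2) by
    funext t; ring_nf, this]
  rw [inv_mul_cancel₀]
  positivity

lemma gφ_sq_integrable : Integrable (fun t => t^2 * gφ t) := by
  have heq : (fun t : ℝ => t^2 * gφ t)
      = fun t : ℝ => (Real.sqrt (2*π))⁻¹ * (t^2 * Real.exp (-t^2/2)) := by
    funext t; unfold gφ; ring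
  rw [heq]
  apply Integrable.const_mul
  have := integrable_rpow_mul_exp_neg_mul_sq (by norm_num : (0:ℝ) < 1/2) (s := 2) (by norm_num)
  convert this using 2 with t
  rw [show ((2:ℝ) : ℝ) = ((2:ℕ) : ℝ) by norm_num, Real.rpow_natCast]
  ring_nf

lemma exp_sq_integral : ∫ t : ℝ, t^2 * Real.exp (-t^2/2) = Real.sqrt (2*π) := by
  have hint : Integrable (fun t : ℝ => t^2 * Real.exp (-t^2/2)) := by
    have := integrable_rpow_mul_exp_neg_mul_sq (by norm_num : (0:ℝ) < 1/2) (s := 2) (by norm_num)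
    convert this using 2 with t
    rw [show ((2:ℝ) : ℝ) = ((2:ℕ) : ℝ) by norm_num, Real.rpow_natCast]
    ring_nf
  have heven : ∀ t : ℝ, (-t)^2 * Real.exp (-(-t)^2/2) = t^2 * Real.exp (-t^2/2) := by
    intro t; ring_nf
  have hIoi : ∫ t in Set.Ioi (0:ℝ), t^2 * Real.exp (-t^2/2) = Real.sqrt (2*π) / 2 := by
    have h := integral_rpow_mul_exp_neg_mul_rpow (p := 2) (q := 2) (b := 1/2)
      (by norm_num) (by norm_num) (by norm_num)
    rw [show ∫ t in Set.Ioi (0:ℝ), t^2 * Real.exp (-t^2/2)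
        = ∫ t in Set.Ioi (0:ℝ), t ^ (2:ℝ) * Real.exp (-(1/2) * t ^ (2:ℝ)) by
      refine setIntegral_congr_fun measurableSet_Ioi (fun t ht => ?_)
      rw [show ((2:ℝ) : ℝ) = ((2:ℕ) : ℝ) by norm_num, Real.rpow_natCast]
      ring_nf, h]
    rw [show ((2:ℝ)+1)/2 = 1/2 + 1 by ring, Real.Gamma_add_one (by norm_num),
      Real.Gamma_one_half_eq]
    rw [show (-((2:ℝ)+1)/2) = (-(3/2) : ℝ) by ring]
    rw [show ((1:ℝ)/2) = 2⁻¹ by norm_num, Real.inv_rpow (by norm_num),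
      ← Real.rpow_neg (by norm_num)]
    rw [neg_neg, show ((3:ℝ)/2) = 1 + 1/2 by ring, Real.rpow_add (by norm_num), Real.rpow_one,
      ← Real.sqrt_eq_rpow, Real.sqrt_mul (by norm_num)]
    ring
  have hsplit : ∫ t : ℝ, t^2 * Real.exp (-t^2/2)
      = (∫ t in Set.Iic (0:ℝ), t^2 * Real.exp (-t^2/2))
        + ∫ t in Set.Ioi (0:ℝ), t^2 * Real.exp (-t^2/2) := by
    rw [← intervalIntegral.integral_Iic_add_Ioi hint.integrableOn hint.integrableOn]
  have hIic : ∫ t in Set.Iic (0:ℝ), t^2 * Real.exp (-t^2/2) = Real.sqrt (2*π) / 2 := by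
    have h := integral_comp_neg_Iic (0:ℝ) (fun t : ℝ => t^2 * Real.exp (-t^2/2))
    simp_rw [heven, neg_zero] at h
    rw [h, hIoi]
  rw [hsplit, hIic, hIoi]; ring

lemma gφ_sq_integral : ∫ t, t^2 * gφ t = 1 := by
  have heq : (fun t : ℝ => t^2 * gφ t)
      = fun t : ℝ => (Real.sqrt (2*π))⁻¹ * (t^2 * Real.exp (-t^2/2)) := by
    funext t; unfold gφ; ring
  rw [heq, integral_const_mul, exp_sq_integral, inv_mul_cancel₀]
  positivity

lemma gρ_prod {n : ℕ} (y : Fin n → ℝ) :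
    gρ n (((MeasurableEquiv.toLp 2 (Fin n → ℝ)).symm).symm y) = ∏ i, gφ (y i) := by
  have hnorm : ‖((MeasurableEquiv.toLp 2 (Fin n → ℝ)).symm).symm y‖^2 = ∑ i, (y i)^2 := by
    rw [EuclideanSpace.norm_eq, Real.sq_sqrt (Finset.sum_nonneg fun i _ => sq_nonneg _)]
    simp
  have hc : ((2*π : ℝ)) ^ (-(n : ℝ)/2) = ((Real.sqrt (2*π))⁻¹) ^ n := by
    rw [Real.sqrt_eq_rpow, ← Real.rpow_neg (by positivity),
      ← Real.rpow_natCast ((2*π) ^ (-(1/2:ℝ))) n, ← Real.rpow_mul (by positivity)]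
    congr 1; ring
  rw [gρ, hnorm, hc]
  simp only [gφ, Finset.prod_mul_distrib, Finset.prod_const, Finset.card_univ, Fintype.card_fin]
  congr 1
  rw [← Real.exp_sum]
  congr 1
  rw [neg_div, ← Finset.sum_div, Finset.sum_neg_distrib, neg_div]

section transfer
variable {n : ℕ}

lemma euclid_transfer (f : EuclideanSpace ℝ (Fin n) → ℝ) :
    ∫ v, f v = ∫ y : Fin n → ℝ, f (((MeasurableEquiv.toLp 2 (Fin n → ℝ)).symm).symm y) :=
  ((((EuclideanSpace.volume_preserving_symm_measurableEquiv_toLp (Fin n)).symm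
      ((MeasurableEquiv.toLp 2 (Fin n → ℝ)).symm)).integral_comp
    (MeasurableEquiv.measurableEmbedding _) f)).symm

lemma euclid_transfer_integrable {f : EuclideanSpace ℝ (Fin n) → ℝ}
    (h : Integrable (fun y : Fin n → ℝ => f (((MeasurableEquiv.toLp 2 (Fin n → ℝ)).symm).symm y))) :
    Integrable f :=
  ((((EuclideanSpace.volume_preserving_symm_measurableEquiv_toLp (Fin n)).symm
      ((MeasurableEquiv.toLp 2 (Fin n → ℝ)).symm)).integrable_comp_emb
    (MeasurableEquiv.measurableEmbedding _))).mp h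

lemma gρ_integrable : Integrable (gρ n) := by
  apply euclid_transfer_integrable
  simp_rw [gρ_prod]
  exact Integrable.fintype_prod (fun i => gφ_integrable)

lemma gρ_integral : ∫ v, gρ n v = 1 := by
  rw [euclid_transfer (gρ n)]
  simp_rw [gρ_prod]
  rw [integral_fintype_prod_volume_eq_prod (fun _ => gφ)]
  simp [gφ_integral]

lemma norm_sq_symm (y : Fin n → ℝ) :
    ‖((MeasurableEquiv.toLp 2 (Fin n → ℝ)).symm).symm y‖^2 = ∑ i, (y i)^2 := by
  rw [EuclideanSpace.norm_eq, Real.sq_sqrt (Finset.sum_nonneg fun i _ => sq_nonneg _)]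
  simp

noncomputable def Ffun (i j : Fin n) (t : ℝ) : ℝ := if j = i then t^2 * gφ t else gφ t

lemma prod_F (i : Fin n) (y : Fin n → ℝ) :
    (y i)^2 * ∏ j, gφ (y j) = ∏ j, Ffun i j (y j) := by
  rw [← Finset.mul_prod_erase Finset.univ (fun j => Ffun i j (y j)) (Finset.mem_univ i),
    ← Finset.mul_prod_erase Finset.univ (fun j => gφ (y j)) (Finset.mem_univ i)]
  have h1 : Ffun i i (y i) = (y i)^2 * gφ (y i) := by simp [Ffun]
  have h2 : ∏ j ∈ Finset.univ.erase i, Ffun i j (y j)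
      = ∏ j ∈ Finset.univ.erase i, gφ (y j) :=
    Finset.prod_congr rfl (fun j hj => by simp [Ffun, Finset.ne_of_mem_erase hj])
  rw [h1, h2]; ring

lemma F_integrable (i j : Fin n) : Integrable (Ffun i j) := by
  by_cases h : j = i
  · have : Ffun i j = fun t => t^2 * gφ t := by funext t; simp [Ffun, h]
    rw [this]; exact gφ_sq_integrable
  · have : Ffun i j = gφ := by funext t; simp [Ffun, h]
    rw [this]; exact gφ_integrable

lemma F_integral (i j : Fin n) : ∫ t, Ffun i j t = 1 := by
  by_cases h : j = i
  · simpa [Ffun, h] using gφ_sq_integral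
  · simpa [Ffun, h] using gφ_integral

lemma gρ_normsq_integrable : Integrable (fun v : EuclideanSpace ℝ (Fin n) => gρ n v * ‖v‖^2) := by
  apply euclid_transfer_integrable
  have heq : ∀ y : Fin n → ℝ,
      gρ n (((MeasurableEquiv.toLp 2 (Fin n → ℝ)).symm).symm y)
        * ‖((MeasurableEquiv.toLp 2 (Fin n → ℝ)).symm).symm y‖^2
      = ∑ i, ∏ j, Ffun i j (y j) := by
    intro y
    rw [gρ_prod, norm_sq_symm, mul_comm, Finset.sum_mul]
    exact Finset.sum_congr rfl (fun i _ => prod_F i y)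
  simp_rw [heq]
  exact integrable_finset_sum _ (fun i _ => Integrable.fintype_prod (fun j => F_integrable i j))

lemma gρ_normsq_integral : ∫ v : EuclideanSpace ℝ (Fin n), gρ n v * ‖v‖^2 = n := by
  rw [euclid_transfer (fun v => gρ n v * ‖v‖^2)]
  have heq : ∀ y : Fin n → ℝ,
      gρ n (((MeasurableEquiv.toLp 2 (Fin n → ℝ)).symm).symm y)
        * ‖((MeasurableEquiv.toLp 2 (Fin n → ℝ)).symm).symm y‖^2
      = ∑ i, ∏ j, Ffun i j (y j) := by
    intro y
    rw [gρ_prod, norm_sq_symm, mul_comm, Finset.sum_mul]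
    exact Finset.sum_congr rfl (fun i _ => prod_F i y)
  simp_rw [heq]
  rw [integral_finset_sum _ (fun i _ => (Integrable.fintype_prod (fun j => F_integrable i j) :
    Integrable (fun y : Fin n → ℝ => ∏ j, Ffun i j (y j))))]
  have : ∀ i : Fin n, ∫ y : Fin n → ℝ, ∏ j, Ffun i j (y j) = 1 := by
    intro i
    rw [integral_fintype_prod_volume_eq_prod (fun j => Ffun i j)]
    simp [F_integral]
  simp [this]

end transfer

lemma gρ_inner_zero {n : ℕ} (c : EuclideanSpace ℝ (Fin n)) : ∫ v, gρ n v * ⟪c, v⟫ = 0 := by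
  have h := integral_neg_eq_self (fun v : EuclideanSpace ℝ (Fin n) => gρ n v * ⟪c, v⟫) volume
  have h2 : ∀ v : EuclideanSpace ℝ (Fin n), gρ n (-v) * ⟪c, -v⟫ = -(gρ n v * ⟪c, v⟫) := by
    intro v
    rw [inner_neg_right]
    unfold gρ
    rw [norm_neg]
    ring
  simp_rw [h2] at h
  rw [integral_neg] at h
  linarith

lemma stdGaussian_integral_eq {n : ℕ} (f : EuclideanSpace ℝ (Fin n) → ℝ) :
    ∫ v, f v ∂stdGaussian n = ∫ v, gρ n v * f v := by
  have hmeas : Measurable (fun v : EuclideanSpace ℝ (Fin n) => Real.toNNReal (gρ n v)) :=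
    (gρ_continuous n).measurable.real_toNNReal
  have hsg : stdGaussian n
      = volume.withDensity (fun v => ((Real.toNNReal (gρ n v) : ℝ≥0) : ℝ≥0∞)) := rfl
  rw [hsg, integral_withDensity_eq_integral_smul hmeas]
  congr 1 with v
  rw [NNReal.smul_def, Real.coe_toNNReal _ (gρ_nonneg n v), smul_eq_mul]

lemma taylor_bound {n : ℕ} (ω : EuclideanSpace ℝ (Fin n) → ℝ)
    (g : EuclideanSpace ℝ (Fin n) → EuclideanSpace ℝ (Fin n)) (L : ℝ)
    (hL0 : 0 ≤ L)
    (hω : ∀ x, HasGradientAt ω (g x) x)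
    (hLip : ∀ a b, ‖g a - g b‖ ≤ L * ‖a - b‖)
    (a b : EuclideanSpace ℝ (Fin n)) :
    |ω b - ω a - ⟪g a, b - a⟫| ≤ L / 2 * ‖b - a‖ ^ 2 := by
  set ψ : ℝ → ℝ := fun t => ω (a + t • (b - a)) - t * ⟪g a, b - a⟫ with hψ
  have hline : ∀ t : ℝ, HasDerivAt (fun s : ℝ => a + s • (b - a)) (b - a) t := by
    intro t
    simpa using ((hasDerivAt_id t).smul_const (b - a)).const_add a
  have hψd : ∀ t : ℝ, HasDerivAt ψ (⟪g (a + t • (b - a)) - g a, b - a⟫) t := by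
    intro t
    have h1 : HasDerivAt (fun s : ℝ => ω (a + s • (b - a))) (⟪g (a + t • (b - a)), b - a⟫) t := by
      have hf := (hasGradientAt_iff_hasFDerivAt.1 (hω (a + t • (b - a))))
      have := hf.comp_hasDerivAt t (hline t)
      simp at this; exact this
    have h2 : HasDerivAt (fun s : ℝ => s * ⟪g a, b - a⟫) (⟪g a, b - a⟫) t :=
      hasDerivAt_mul_const _
    rw [inner_sub_left]; exact h1.sub h2
  have hgcont : Continuous g := by
    have : LipschitzWith (Real.toNNReal L) g := by
      apply LipschitzWith.of_dist_le_mul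
      intro p q
      rw [dist_eq_norm, dist_eq_norm, Real.coe_toNNReal _ hL0]
      exact hLip p q
    exact this.continuous
  have hcd : Continuous fun t : ℝ => ⟪g (a + t • (b - a)) - g a, b - a⟫ :=
    Continuous.inner ((hgcont.comp (by fun_prop)).sub continuous_const) continuous_const
  have hftc : ψ 1 - ψ 0 = ∫ t in (0:ℝ)..1, ⟪g (a + t • (b - a)) - g a, b - a⟫ := by
    rw [intervalIntegral.integral_eq_sub_of_hasDerivAt (fun t _ => hψd t)
      (hcd.intervalIntegrable 0 1)]
  have hbound : ∀ t ∈ Set.Icc (0:ℝ) 1,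
      |⟪g (a + t • (b - a)) - g a, b - a⟫| ≤ t * (L * ‖b - a‖^2) := by
    intro t ht
    calc |⟪g (a + t • (b - a)) - g a, b - a⟫| ≤ ‖g (a + t • (b - a)) - g a‖ * ‖b - a‖ :=
          abs_real_inner_le_norm _ _
      _ ≤ (L * ‖(a + t • (b - a)) - a‖) * ‖b - a‖ := by
          gcongr; exact hLip _ _
      _ = t * (L * ‖b - a‖^2) := by
          rw [add_sub_cancel_left, norm_smul, Real.norm_eq_abs, abs_of_nonneg ht.1]; ring
  have h0 : ψ 0 = ω a := by simp [hψ]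
  have h1 : ψ 1 = ω b - ⟪g a, b - a⟫ := by simp [hψ]
  have key : |ψ 1 - ψ 0| ≤ L / 2 * ‖b - a‖ ^ 2 := by
    rw [hftc]
    calc |∫ t in (0:ℝ)..1, ⟪g (a + t • (b - a)) - g a, b - a⟫|
        ≤ ∫ t in (0:ℝ)..1, |⟪g (a + t • (b - a)) - g a, b - a⟫| :=
          intervalIntegral.abs_integral_le_integral_abs zero_le_one
      _ ≤ ∫ t in (0:ℝ)..1, t * (L * ‖b - a‖^2) := by
          apply intervalIntegral.integral_mono_on zero_le_one
            (hcd.abs.intervalIntegrable 0 1)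
            (by apply Continuous.intervalIntegrable; fun_prop)
          exact hbound
      _ = L / 2 * ‖b - a‖ ^ 2 := by
          rw [intervalIntegral.integral_mul_const, integral_id]; ring
  calc |ω b - ω a - ⟪g a, b - a⟫| = |ψ 1 - ψ 0| := by rw [h0, h1]; ring_nf
    _ ≤ _ := key

end Helpers

open Real RealInnerProductSpace

/-- for the Gaussian smoothing ω_μ(x) = ∫ ω(x + μv) dγ_n(v) of a C¹
function ω with L-Lipschitz gradient: |ω_μ(x) − ω(x)| ≤ (μ²/2)·L·n. -/
theorem stmt_15 {n : ℕ} (ω : EuclideanSpace ℝ (Fin n) → ℝ)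
    (gradω : EuclideanSpace ℝ (Fin n) → EuclideanSpace ℝ (Fin n))
    (L μ : ℝ) (hL : 0 < L) (hμ : 0 < μ)
    (hω : ∀ x, HasGradientAt ω (gradω x) x)
    (hLip : ∀ a b, ‖gradω a - gradω b‖ ≤ L * ‖a - b‖)
    (x : EuclideanSpace ℝ (Fin n)) :
    |(∫ v, ω (x + μ • v) ∂stdGaussian n) - ω x| ≤ μ ^ 2 / 2 * L * n := by
  have hL0 : (0:ℝ) ≤ L := hL.le
  have taylor := taylor_bound ω gradω L hL0 hω hLip
  have hωcont : Continuous ω :=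
    continuous_iff_continuousAt.2 fun y => ((hω y).differentiableAt).continuousAt
  set G := gradω x with hG
  -- pointwise Taylor estimate at x
  have htay : ∀ v : EuclideanSpace ℝ (Fin n),
      |ω (x + μ • v) - ω x - ⟪G, μ • v⟫| ≤ L / 2 * (μ^2 * ‖v‖^2) := by
    intro v
    have h := taylor x (x + μ • v)
    rw [add_sub_cancel_left] at h
    have hn : ‖μ • v‖^2 = μ^2 * ‖v‖^2 := by
      rw [norm_smul, Real.norm_eq_abs, mul_pow, sq_abs]
    rw [hn] at h
    exact h
  have hvle : ∀ v : EuclideanSpace ℝ (Fin n), ‖v‖ ≤ 1 + ‖v‖^2 := by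
    intro v
    nlinarith [norm_nonneg v, sq_nonneg (‖v‖ - 1)]
  -- integrability facts
  have hbase : Integrable (fun v : EuclideanSpace ℝ (Fin n) => gρ n v * (1 + ‖v‖^2)) := by
    have : (fun v : EuclideanSpace ℝ (Fin n) => gρ n v * (1 + ‖v‖^2))
        = fun v => gρ n v + gρ n v * ‖v‖^2 := by funext v; ring
    rw [this]
    exact gρ_integrable.add gρ_normsq_integrable
  have hinner_bound : ∀ v : EuclideanSpace ℝ (Fin n), |⟪G, μ • v⟫| ≤ ‖G‖ * μ * ‖v‖ := by
    intro v
    calc |⟪G, μ • v⟫| ≤ ‖G‖ * ‖μ • v‖ := abs_real_inner_le_norm _ _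
      _ = ‖G‖ * μ * ‖v‖ := by
          rw [norm_smul, Real.norm_eq_abs, abs_of_pos hμ]; ring
  have hI1 : Integrable (fun v : EuclideanSpace ℝ (Fin n) => gρ n v * ω (x + μ • v)) := by
    set K : ℝ := |ω x| + ‖G‖ * μ + L / 2 * μ^2 with hK
    have hK0 : 0 ≤ K := by
      have : 0 ≤ ‖G‖ * μ := by positivity
      have : 0 ≤ L / 2 * μ^2 := by positivity
      have := abs_nonneg (ω x)
      rw [hK]; positivity
    apply Integrable.mono' (hbase.const_mul K)
    · exact ((gρ_continuous n).mul (hωcont.comp (by fun_prop))).aestronglyMeasurable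
    · filter_upwards with v
      rw [Real.norm_eq_abs, abs_mul, abs_of_nonneg (gρ_nonneg n v)]
      have hb : |ω (x + μ • v)| ≤ K * (1 + ‖v‖^2) := by
        have h1 := htay v
        have h2 := hinner_bound v
        have h3 := hvle v
        have h4 : |ω (x + μ • v)| ≤ |ω x| + |⟪G, μ • v⟫| + L / 2 * (μ^2 * ‖v‖^2) := by
          have := abs_sub_abs_le_abs_sub (ω (x + μ • v)) (ω x + ⟪G, μ • v⟫)
          have habs : |ω (x + μ • v) - (ω x + ⟪G, μ • v⟫)| ≤ L / 2 * (μ^2 * ‖v‖^2) := by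
            rw [show ω (x + μ • v) - (ω x + ⟪G, μ • v⟫)
              = ω (x + μ • v) - ω x - ⟪G, μ • v⟫ by ring]
            exact h1
          have htri := abs_add_le (ω x) (⟪G, μ • v⟫)
          nlinarith [abs_nonneg (ω (x + μ • v) - (ω x + ⟪G, μ • v⟫))]
        have h5 : ‖G‖ * μ * ‖v‖ ≤ ‖G‖ * μ * (1 + ‖v‖^2) := by
          have : 0 ≤ ‖G‖ * μ := by positivity
          nlinarith
        have h6 : L / 2 * (μ^2 * ‖v‖^2) ≤ L / 2 * μ^2 * (1 + ‖v‖^2) := by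
          have : 0 ≤ L / 2 * μ^2 := by positivity
          nlinarith [sq_nonneg ‖v‖]
        have h7 : 0 ≤ ‖v‖^2 := sq_nonneg _
        rw [hK]
        nlinarith [abs_nonneg (ω x)]
      calc gρ n v * |ω (x + μ • v)| ≤ gρ n v * (K * (1 + ‖v‖^2)) := by
            exact mul_le_mul_of_nonneg_left hb (gρ_nonneg n v)
        _ = K * (gρ n v * (1 + ‖v‖^2)) := by ring
  have hI3 : Integrable (fun v : EuclideanSpace ℝ (Fin n) => gρ n v * ⟪G, μ • v⟫) := by
    apply Integrable.mono' (hbase.const_mul (‖G‖ * μ))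
    · apply Continuous.aestronglyMeasurable
      apply (gρ_continuous n).mul
      exact Continuous.inner continuous_const (by fun_prop)
    · filter_upwards with v
      rw [Real.norm_eq_abs, abs_mul, abs_of_nonneg (gρ_nonneg n v)]
      have hb : |⟪G, μ • v⟫| ≤ ‖G‖ * μ * (1 + ‖v‖^2) := by
        have := hinner_bound v
        have h3 := hvle v
        have h0 : 0 ≤ ‖G‖ * μ := by positivity
        nlinarith
      calc gρ n v * |⟪G, μ • v⟫| ≤ gρ n v * (‖G‖ * μ * (1 + ‖v‖^2)) :=
            mul_le_mul_of_nonneg_left hb (gρ_nonneg n v)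
        _ = (‖G‖ * μ) * (gρ n v * (1 + ‖v‖^2)) := by ring
  -- the linear term integrates to zero
  have hlin : ∫ v, gρ n v * ⟪G, μ • v⟫ = 0 := by
    have heq : ∀ v : EuclideanSpace ℝ (Fin n), ⟪G, μ • v⟫ = ⟪μ • G, v⟫ := by
      intro v
      rw [real_inner_smul_left, real_inner_smul_right]
    simp_rw [heq]
    exact gρ_inner_zero (μ • G)
  -- main computation
  rw [stdGaussian_integral_eq (fun v => ω (x + μ • v))]
  have hsplit : (∫ v, gρ n v * ω (x + μ • v)) - ω x
      = ∫ v, gρ n v * (ω (x + μ • v) - ω x - ⟪G, μ • v⟫) := by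
    have heq : (fun v : EuclideanSpace ℝ (Fin n)
          => gρ n v * (ω (x + μ • v) - ω x - ⟪G, μ • v⟫))
        = fun v => gρ n v * ω (x + μ • v) - (ω x * gρ n v + gρ n v * ⟪G, μ • v⟫) := by
      funext v; ring
    have hadd : Integrable (fun v : EuclideanSpace ℝ (Fin n)
        => ω x * gρ n v + gρ n v * ⟪G, μ • v⟫) :=
      (gρ_integrable.const_mul (ω x)).add hI3
    rw [heq, integral_sub hI1 hadd,
      integral_add (gρ_integrable.const_mul (ω x)) hI3, integral_const_mul, gρ_integral, hlin]
    ring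
  rw [hsplit]
  have hmaj : Integrable (fun v : EuclideanSpace ℝ (Fin n) => L / 2 * μ^2 * (gρ n v * ‖v‖^2)) :=
    gρ_normsq_integrable.const_mul _
  have habs : |∫ v, gρ n v * (ω (x + μ • v) - ω x - ⟪G, μ • v⟫)|
      ≤ ∫ v, L / 2 * μ^2 * (gρ n v * ‖v‖^2) := by
    rw [← Real.norm_eq_abs]
    apply norm_integral_le_of_norm_le hmaj
    filter_upwards with v
    rw [Real.norm_eq_abs, abs_mul, abs_of_nonneg (gρ_nonneg n v)]
    calc gρ n v * |ω (x + μ • v) - ω x - ⟪G, μ • v⟫|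
        ≤ gρ n v * (L / 2 * (μ^2 * ‖v‖^2)) :=
          mul_le_mul_of_nonneg_left (htay v) (gρ_nonneg n v)
      _ = L / 2 * μ^2 * (gρ n v * ‖v‖^2) := by ring
  have hval : ∫ v : EuclideanSpace ℝ (Fin n), L / 2 * μ^2 * (gρ n v * ‖v‖^2)
      = L / 2 * μ^2 * n := by
    rw [integral_const_mul, gρ_normsq_integral]
  rw [hval] at habs
  calc |∫ v, gρ n v * (ω (x + μ • v) - ω x - ⟪G, μ • v⟫)| ≤ L / 2 * μ^2 * n := habs
    _ = μ ^ 2 / 2 * L * n := by ring
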